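/- In OPol_n with differential d(x_i) = x_i² extended as an odd derivation, the subalgebra OΛ_n of odd symmetric polynomials (generated by the untwisted odd elementary symmetric polynomials e_k) is closed under d; precisely, d(e_k) = e_1 e_k − {k+1} e_{k+1}, where {m} = 0 if m is even and 1 if m is odd, and e_{n+1} = 0. -/

import Mathlib

/-- The `k`-th untwisted odd elementary symmetric polynomial
`e_k = Σ_{i_1<…<i_k} x_{i_1}⋯x_{i_k}` (so `e_0 = 1` and `e_k = 0` for `k > n`). -/
noncomputable def oddE {A : Type*} [Ring A] {n : ℕ} (x : Fin n → A) (k : ℕ) : A :=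
  ∑ s ∈ Finset.powersetCard k (Finset.univ : Finset (Fin n)),
    ((Finset.sort s (· ≤ ·)).map x).prod


lemma mySortMap {α β : Type*} [LinearOrder α] [LinearOrder β] (f : α ↪ β)
    (hf : ∀ a b : α, f a ≤ f b ↔ a ≤ b) (s : Finset α) :
    Finset.sort (s.map f) (· ≤ ·) = (Finset.sort s (· ≤ ·)).map f := by
  refine (fun p h => List.Perm.eq_of_pairwise' (r := (· ≤ ·)) (Finset.pairwise_sort _ _) h p) (Multiset.coe_eq_coe.mp ?_) ?_
  · rw [Finset.sort_eq, Finset.map_val, ← Multiset.map_coe, Finset.sort_eq]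
  · exact List.pairwise_map.mpr ((Finset.pairwise_sort s (· ≤ ·)).imp (fun h => (hf _ _).mpr h))

lemma mySortInsertMax {α : Type*} [LinearOrder α] [DecidableEq α] {a : α} {s : Finset α}
    (h₁ : ∀ b ∈ s, b ≤ a) (h₂ : a ∉ s) :
    Finset.sort (insert a s) (· ≤ ·) = Finset.sort s (· ≤ ·) ++ [a] := by
  refine (fun p h => List.Perm.eq_of_pairwise' (r := (· ≤ ·)) (Finset.pairwise_sort _ _) h p) (Multiset.coe_eq_coe.mp ?_) ?_
  · rw [Finset.sort_eq, Finset.insert_val_of_notMem h₂]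
    rw [show ((Finset.sort s (· ≤ ·) ++ [a] : List α) : Multiset α)
        = (Finset.sort s (· ≤ ·) : Multiset α) + ([a] : List α) from rfl]
    rw [Finset.sort_eq, add_comm, Multiset.coe_singleton, Multiset.singleton_add]
  · rw [List.pairwise_append]
    exact ⟨Finset.pairwise_sort _ _, List.pairwise_singleton _ _,
      fun b hb c hc => by simp at hc; subst hc; exact h₁ b ((Finset.mem_sort _).mp hb)⟩

lemma oddE_zero {A : Type*} [Ring A] {n : ℕ} (x : Fin n → A) : oddE x 0 = 1 := by
  simp [oddE, Finset.powersetCard_zero]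

lemma oddE_fin_zero {A : Type*} [Ring A] (x : Fin 0 → A) (k : ℕ) : oddE x (k + 1) = 0 := by
  rw [oddE, show (Finset.univ : Finset (Fin 0)) = ∅ from rfl]
  rw [Finset.powersetCard_eq_empty.mpr (by simp), Finset.sum_empty]

lemma last_not_mem {n : ℕ} :
    Fin.last n ∉ (Finset.univ : Finset (Fin n)).map Fin.castSuccEmb := by
  simp only [Finset.mem_map, Finset.mem_univ, true_and, Fin.castSuccEmb, Fin.castAddEmb]
  rintro ⟨j, hj⟩
  exact absurd hj (Fin.castSucc_lt_last j).ne

lemma sum_castSucc {A : Type*} [Ring A] {n : ℕ} (x : Fin (n + 1) → A) (k : ℕ) :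
    ∑ s ∈ Finset.powersetCard k ((Finset.univ : Finset (Fin n)).map Fin.castSuccEmb),
      ((Finset.sort s (· ≤ ·)).map x).prod = oddE (x ∘ Fin.castSucc) k := by
  rw [Finset.powersetCard_map, Finset.sum_map, oddE]
  refine Finset.sum_congr rfl fun t _ => ?_
  rw [show (Finset.mapEmbedding Fin.castSuccEmb).toEmbedding t = t.map Fin.castSuccEmb from rfl,
    mySortMap Fin.castSuccEmb (fun a b => Fin.castSucc_le_castSucc_iff) t, List.map_map]
  rfl

lemma oddE_succ {A : Type*} [Ring A] {n : ℕ} (x : Fin (n + 1) → A) (k : ℕ) :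
    oddE x (k + 1) =
      oddE (x ∘ Fin.castSucc) (k + 1) + oddE (x ∘ Fin.castSucc) k * x (Fin.last n) := by
  classical
  have hlast := last_not_mem (n := n)
  rw [oddE, Fin.univ_castSuccEmb, Finset.cons_eq_insert,
    Finset.powersetCard_succ_insert hlast]
  rw [Finset.sum_union ?disj]
  case disj =>
    rw [Finset.disjoint_left]
    intro s hs hs'
    rw [Finset.mem_powersetCard] at hs
    obtain ⟨t, ht, rfl⟩ := Finset.mem_image.mp hs'
    exact hlast (hs.1 (Finset.mem_insert_self _ _))
  rw [sum_castSucc]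
  congr 1
  rw [Finset.sum_image ?inj]
  case inj =>
    intro s hs t ht h
    rw [Finset.mem_coe, Finset.mem_powersetCard] at hs ht
    have hs' : Fin.last n ∉ s := fun h' => hlast (hs.1 h')
    have ht' : Fin.last n ∉ t := fun h' => hlast (ht.1 h')
    rw [← Finset.erase_insert hs', h, Finset.erase_insert ht']
  rw [← sum_castSucc x k, Finset.sum_mul]
  refine Finset.sum_congr rfl fun s hs => ?_
  rw [Finset.mem_powersetCard] at hs
  have hs' : Fin.last n ∉ s := fun h' => last_not_mem (hs.1 h')
  rw [mySortInsertMax (fun b _ => Fin.le_last b) hs', List.map_append, List.prod_append]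
  simp

lemma iotaList {A : Type*} [Ring A] {n : ℕ} (x : Fin n → A) (ι : A →+* A)
    (hιx : ∀ i, ι (x i) = -x i) :
    ∀ l : List (Fin n), ι ((l.map x).prod) = (-1) ^ l.length * (l.map x).prod := by
  intro l
  induction l with
  | nil => simp
  | cons a l ih =>
      have c : ((-1 : A) ^ l.length) * x a = x a * (-1) ^ l.length :=
        ((Commute.neg_one_left (x a)).pow_left l.length).eq
      simp only [List.map_cons, List.prod_cons, map_mul, hιx, ih, List.length_cons, pow_succ]
      simp only [neg_mul, mul_neg, mul_one, ← mul_assoc]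
      rw [c]

lemma commList {A : Type*} [Ring A] {n : ℕ} (x : Fin n → A) (y : A) :
    ∀ l : List (Fin n), (∀ i ∈ l, y * x i = -(x i * y)) →
      y * (l.map x).prod = (-1) ^ l.length * ((l.map x).prod * y) := by
  intro l
  induction l with
  | nil => simp
  | cons a l ih =>
      intro h
      simp only [List.map_cons, List.prod_cons, List.length_cons]
      have c : ((-1 : A) ^ l.length) * x a = x a * (-1) ^ l.length :=
        ((Commute.neg_one_left (x a)).pow_left l.length).eq
      rw [← mul_assoc, h a (List.mem_cons_self), neg_mul, mul_assoc,
        ih (fun i hi => h i (List.mem_cons_of_mem a hi)), pow_succ]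
      simp only [neg_mul, mul_neg, mul_one, ← mul_assoc]
      rw [c]

lemma iotaOddE {A : Type*} [Ring A] {n : ℕ} (x : Fin n → A) (ι : A →+* A)
    (hιx : ∀ i, ι (x i) = -x i) (k : ℕ) :
    ι (oddE x k) = (-1) ^ k * oddE x k := by
  rw [oddE, map_sum, Finset.mul_sum]
  refine Finset.sum_congr rfl fun s hs => ?_
  rw [Finset.mem_powersetCard] at hs
  rw [iotaList x ι hιx, Finset.length_sort, hs.2]

lemma commOddE {A : Type*} [Ring A] {n : ℕ} (x : Fin n → A) (y : A)
    (hy : ∀ i, y * x i = -(x i * y)) (k : ℕ) :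
    y * oddE x k = (-1) ^ k * (oddE x k * y) := by
  rw [oddE, Finset.mul_sum, Finset.sum_mul, Finset.mul_sum]
  refine Finset.sum_congr rfl fun s hs => ?_
  rw [Finset.mem_powersetCard] at hs
  rw [commList x y _ (fun i _ => hy i), Finset.length_sort, hs.2]

lemma dKey {A : Type*} [Ring A] (ι : A →+* A) (d : A → A)
    (hd_add : ∀ a b, d (a + b) = d a + d b)
    (hd_leib : ∀ a b, d (a * b) = d a * b + ι a * d b) :
    ∀ (n : ℕ) (x : Fin n → A),
      (∀ i j, i ≠ j → x i * x j = -(x j * x i)) →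
      (∀ i, ι (x i) = -x i) →
      (∀ i, d (x i) = x i ^ 2) →
      ∀ k, d (oddE x k) =
        oddE x 1 * oddE x k - (if Even (k + 1) then (0 : A) else 1) * oddE x (k + 1) := by
  have hd1 : d 1 = 0 := by
    have h := hd_leib 1 1
    rw [mul_one, map_one, one_mul, mul_one] at h
    exact (left_eq_add.mp h)
  have hd0 : d 0 = 0 := by
    have h := hd_add 0 0
    rw [add_zero] at h
    exact (left_eq_add.mp h)
  intro n
  induction n with
  | zero =>
      intro x _ _ _ k
      have h1 : oddE x 1 = 0 := oddE_fin_zero x 0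
      cases k with
      | zero =>
          rw [oddE_zero, hd1, h1, zero_mul, mul_zero, sub_zero]
      | succ k =>
          rw [oddE_fin_zero x k, hd0, h1, zero_mul, oddE_fin_zero x (k + 1), mul_zero, sub_zero]
  | succ n IH =>
      intro x hxx hιx hdx k
      have hxx' : ∀ i j : Fin n, i ≠ j →
          (x ∘ Fin.castSucc) i * (x ∘ Fin.castSucc) j =
            -((x ∘ Fin.castSucc) j * (x ∘ Fin.castSucc) i) :=
        fun i j hij => hxx _ _ (fun e => hij (Fin.castSucc_injective n e))
      have hιx' : ∀ i, ι ((x ∘ Fin.castSucc) i) = -(x ∘ Fin.castSucc) i := fun i => hιx _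
      have hdx' : ∀ i, d ((x ∘ Fin.castSucc) i) = (x ∘ Fin.castSucc) i ^ 2 := fun i => hdx _
      have IH' := IH (x ∘ Fin.castSucc) hxx' hιx' hdx'
      have hcomm : ∀ i : Fin n,
          x (Fin.last n) * (x ∘ Fin.castSucc) i = -((x ∘ Fin.castSucc) i * x (Fin.last n)) :=
        fun i => hxx _ _ (fun e => (Fin.castSucc_lt_last i).ne' e)
      cases k with
      | zero =>
          rw [oddE_zero, hd1, mul_one]
          rw [show (if Even (0 + 1) then (0 : A) else 1) = 1 by norm_num, one_mul, sub_self]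
      | succ k =>
          have e1 : oddE x 1 = oddE (x ∘ Fin.castSucc) 1 +
              oddE (x ∘ Fin.castSucc) 0 * x (Fin.last n) := oddE_succ x 0
          rw [oddE_succ x (k + 1), oddE_succ x k, e1, oddE_zero, one_mul]
          rw [hd_add, hd_leib, hdx (Fin.last n), IH' (k + 1), IH' k, iotaOddE _ ι hιx' k]
          have c1 := commOddE (x ∘ Fin.castSucc) (x (Fin.last n)) hcomm (k + 1)
          have c2 := commOddE (x ∘ Fin.castSucc) (x (Fin.last n)) hcomm k
          rw [add_mul, mul_add, mul_add, c1,
            ← mul_assoc (x (Fin.last n)) (oddE (x ∘ Fin.castSucc) k) (x (Fin.last n)), c2,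
            pow_two]
          rcases Nat.even_or_odd k with he | ho
          · have h1 : (if Even (k + 1) then (0 : A) else 1) = 1 :=
              if_neg (by simp [Nat.even_add_one, he])
            have h2 : (if Even (k + 1 + 1) then (0 : A) else 1) = 0 :=
              if_pos (by rcases he with ⟨m, rfl⟩; exact ⟨m + 1, by omega⟩)
            have h3 : ((-1 : A)) ^ k = 1 := he.neg_one_pow
            have h4 : ((-1 : A)) ^ (k + 1) = -1 := (he.add_one).neg_one_pow
            rw [h1, h2, h3, h4]
            noncomm_ring
          · have h1 : (if Even (k + 1) then (0 : A) else 1) = 0 := if_pos ho.add_one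
            have h2 : (if Even (k + 1 + 1) then (0 : A) else 1) = 1 :=
              if_neg (by rcases ho with ⟨m, rfl⟩; rintro ⟨r, hr⟩; omega)
            have h3 : ((-1 : A)) ^ k = -1 := ho.neg_one_pow
            have h4 : ((-1 : A)) ^ (k + 1) = 1 := (ho.add_one).neg_one_pow
            rw [h1, h2, h3, h4]
            noncomm_ring

/-- In `OPol_n` (presented abstractly: `x i` odd anticommuting
generators, `ι` the parity involution, `d` the odd derivation with
`d (x i) = x i ^ 2`), the differential satisfies
`d(e_k) = e_1 e_k − {k+1} e_{k+1}` (with `{m} = 0` for `m` even, `1` for `m` odd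
and `e_{n+1} = 0`); consequently the subalgebra `OΛ_n` generated by the `e_k`
is closed under `d`. -/
theorem stmt1 {A : Type*} [Ring A] {n : ℕ} (x : Fin n → A)
    (hxx : ∀ i j, i ≠ j → x i * x j = -(x j * x i))
    (ι : A →+* A) (hιx : ∀ i, ι (x i) = -x i)
    (d : A → A)
    (hd_add : ∀ a b, d (a + b) = d a + d b)
    (hd_leib : ∀ a b, d (a * b) = d a * b + ι a * d b)
    (hdx : ∀ i, d (x i) = x i ^ 2) :
    (∀ k : ℕ, d (oddE x k) =
        oddE x 1 * oddE x k - (if Even (k + 1) then (0 : A) else 1) * oddE x (k + 1))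
      ∧ ∀ a ∈ Subring.closure (Set.range (oddE x)),
          d a ∈ Subring.closure (Set.range (oddE x)) := by
  have hd1 : d 1 = 0 := by
    have h := hd_leib 1 1
    rw [mul_one, map_one, one_mul, mul_one] at h
    exact (left_eq_add.mp h)
  have hd0 : d 0 = 0 := by
    have h := hd_add 0 0
    rw [add_zero] at h
    exact (left_eq_add.mp h)
  have hdneg : ∀ a, d (-a) = -d a := by
    intro a
    have h := hd_add a (-a)
    rw [add_neg_cancel, hd0] at h
    exact (eq_neg_of_add_eq_zero_right h.symm)
  have part1 := dKey ι d hd_add hd_leib n x hxx hιx hdx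
  refine ⟨part1, ?_⟩
  have hgen : ∀ k : ℕ, oddE x k ∈ Subring.closure (Set.range (oddE x)) :=
    fun k => Subring.subset_closure ⟨k, rfl⟩
  have hι_mem : ∀ a ∈ Subring.closure (Set.range (oddE x)),
      ι a ∈ Subring.closure (Set.range (oddE x)) := by
    intro a ha
    induction ha using Subring.closure_induction with
    | mem b hb =>
        obtain ⟨k, rfl⟩ := hb
        rw [iotaOddE x ι hιx k]
        rcases Nat.even_or_odd k with he | ho
        · rw [he.neg_one_pow, one_mul]; exact hgen k
        · rw [ho.neg_one_pow, neg_one_mul]; exact neg_mem (hgen k)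
    | zero => rw [map_zero]; exact zero_mem _
    | one => rw [map_one]; exact one_mem _
    | add a b _ _ hA hB => rw [map_add]; exact add_mem hA hB
    | neg a _ hA => rw [map_neg]; exact neg_mem hA
    | mul a b _ _ hA hB => rw [map_mul]; exact mul_mem hA hB
  intro a ha
  induction ha using Subring.closure_induction with
  | mem b hb =>
      obtain ⟨k, rfl⟩ := hb
      rw [part1 k]
      refine sub_mem (mul_mem (hgen 1) (hgen k)) (mul_mem ?_ (hgen (k + 1)))
      split_ifs
      · exact zero_mem _
      · exact one_mem _
  | zero => rw [hd0]; exact zero_mem _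
  | one => rw [hd1]; exact zero_mem _
  | add a b _ _ hA hB => rw [hd_add]; exact add_mem hA hB
  | neg a _ hA => rw [hdneg]; exact neg_mem hA
  | mul a b ha hb hA hB =>
      rw [hd_leib]
      exact add_mem (mul_mem hA hb) (mul_mem (hι_mem a ha) hB)
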